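/- Let ξ be a nonnegative random variable with E[ξ]=1, Var(ξ)>0, and finite third moment. Then there exist constants C > 0 and h_0 > 0 such that for all h ∈ (0, h_0], max_{p∈[0,1]} E[√(1 + p(e^h ξ − 1))] − 1 ≤ C h^2. -/

import Mathlib

open MeasureTheory

lemma sqrt_le_cubic {u : ℝ} (hu : -1 ≤ u) :
    Real.sqrt (1 + u) ≤ 1 + u/2 - u^2/8 + u^3/16 := by
  have hq : 0 < 1 + u/2 - u^2/8 + u^3/16 := by
    nlinarith [sq_nonneg u, sq_nonneg (u-1), sq_nonneg (u+1)]
  have h1 : 1 + u ≤ (1 + u/2 - u^2/8 + u^3/16)^2 := by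
    nlinarith [sq_nonneg (u^2*(u-2)), sq_nonneg u, sq_nonneg (u^2)]
  calc Real.sqrt (1 + u) ≤ Real.sqrt ((1 + u/2 - u^2/8 + u^3/16)^2) := Real.sqrt_le_sqrt h1
    _ = 1 + u/2 - u^2/8 + u^3/16 := Real.sqrt_sq hq.le

lemma sqrt_le_one_add_abs (t : ℝ) : Real.sqrt t ≤ 1 + |t| := by
  rcases le_or_gt t 1 with h | h
  · calc Real.sqrt t ≤ Real.sqrt 1 := Real.sqrt_le_sqrt h
      _ = 1 := Real.sqrt_one
      _ ≤ 1 + |t| := by simp [abs_nonneg]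
  · have h0 : 0 ≤ t := by linarith
    have : Real.sqrt t ≤ t := by
      nlinarith [Real.sq_sqrt h0, Real.sqrt_nonneg t]
    calc Real.sqrt t ≤ t := this
      _ ≤ 1 + |t| := by cases abs_cases t <;> linarith

lemma concave_sqrt_comb {t x : ℝ} (ht0 : 0 ≤ t) (ht1 : t ≤ 1) (hx : 0 ≤ x) :
    (1 - t) + t * Real.sqrt x ≤ Real.sqrt (1 - t + t * x) := by
  have hs := Real.sq_sqrt hx
  have hs0 := Real.sqrt_nonneg x
  have hge : 0 ≤ (1 - t) + t * Real.sqrt x := by nlinarith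
  have h1 : ((1 - t) + t * Real.sqrt x)^2 ≤ 1 - t + t * x := by
    nlinarith [mul_nonneg (mul_nonneg ht0 (by linarith : (0:ℝ) ≤ 1 - t)) (sq_nonneg (1 - Real.sqrt x))]
  calc (1 - t) + t * Real.sqrt x = Real.sqrt (((1 - t) + t * Real.sqrt x)^2) := (Real.sqrt_sq hge).symm
    _ ≤ Real.sqrt (1 - t + t * x) := Real.sqrt_le_sqrt h1

lemma small_p_arith {σ2 K B G a p h : ℝ} (hσ2 : 0 < σ2) (hK : 0 < K)
    (hB : σ2 ≤ B) (hG : G ≤ K) (hpK : p * K ≤ σ2)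
    (hp0 : 0 ≤ p) (ha0 : 0 ≤ a) (ha3 : a ≤ 3*h) (hh0 : 0 < h) :
    1 + (p/2) * a - (p^2/8) * B + (p^3/16) * G ≤ 1 + 9/σ2 * h^2 := by
  rw [← sub_nonneg]
  have expand : 1 + 9/σ2 * h^2 - (1 + (p/2) * a - (p^2/8) * B + (p^3/16) * G)
      = (9 * h^2 - ((p/2) * a - (p^2/8) * B + (p^3/16) * G) * σ2) / σ2 := by
    field_simp; ring
  rw [expand]
  apply div_nonneg _ hσ2.le
  have e1 : (p^3/16) * G * σ2 ≤ (p^2/16) * σ2 * σ2 := by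
    have t1 : (p^3/16) * G ≤ (p^3/16) * K := mul_le_mul_of_nonneg_left hG (by positivity)
    have t2 : p^2 * (p*K) ≤ p^2 * σ2 := mul_le_mul_of_nonneg_left hpK (sq_nonneg p)
    have t3 := mul_le_mul_of_nonneg_right t1 hσ2.le
    have t4 := mul_le_mul_of_nonneg_right t2 hσ2.le
    nlinarith [t3, t4]
  have e2 : (p^2/8) * σ2 * σ2 ≤ (p^2/8) * B * σ2 :=
    mul_le_mul_of_nonneg_right
      (mul_le_mul_of_nonneg_left hB (by positivity : (0:ℝ) ≤ p^2/8)) hσ2.le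
  have ha2 : a^2 ≤ 9*h^2 := by nlinarith
  nlinarith [sq_nonneg (4 * a - p * σ2), e1, e2, ha2]

set_option maxHeartbeats 3200000 in
/-- The maximum over `p ∈ [0,1]` of `E[√(1 + p(e^h ξ − 1))] − 1` is `O(h²)`. -/
theorem sqrt_functional_max_le_quadratic
    {Ω : Type*} [MeasurableSpace Ω] (μ : Measure Ω) [IsProbabilityMeasure μ]
    (ξ : Ω → ℝ) (hmeas : Measurable ξ)
    (hpos : ∀ᵐ ω ∂μ, 0 ≤ ξ ω)
    (hint : Integrable ξ μ) (hmean : ∫ ω, ξ ω ∂μ = 1)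
    (h2 : Integrable (fun ω => (ξ ω - 1)^2) μ)
    (h3 : Integrable (fun ω => |ξ ω - 1|^3) μ)
    (hvar : 0 < ∫ ω, (ξ ω - 1)^2 ∂μ) :
    ∃ C h₀ : ℝ, 0 < C ∧ 0 < h₀ ∧ ∀ h : ℝ, 0 < h → h ≤ h₀ →
      (⨆ p : Set.Icc (0:ℝ) 1,
          ∫ ω, Real.sqrt (1 + (p : ℝ) * (Real.exp h * ξ ω - 1)) ∂μ) - 1 ≤ C * h^2 := by
  have hσ2 := hvar
  set σ2 := ∫ ω, (ξ ω - 1)^2 ∂μ with hσ2def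
  -- basic integrabilities
  have hint1 : Integrable (fun ω => ξ ω - 1) μ := hint.sub (integrable_const 1)
  have hmean1 : ∫ ω, (ξ ω - 1) ∂μ = 0 := by
    rw [integral_sub hint (integrable_const 1)]
    simp [hmean]
  have hξ2 : Integrable (fun ω => (ξ ω)^2) μ := by
    have : (fun ω => (ξ ω)^2) = fun ω => ((ξ ω - 1)^2 + 2 * ξ ω - 1) := by funext ω; ring
    rw [this]
    exact (h2.add (hint.const_mul 2)).sub (integrable_const 1)
  have hcube : Integrable (fun ω => (ξ ω - 1)^3) μ := by
    refine h3.mono' ((hmeas.sub measurable_const).pow_const 3).aestronglyMeasurable ?_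
    filter_upwards with ω
    rw [Real.norm_eq_abs, ← abs_pow]
  have hξ3 : Integrable (fun ω => (ξ ω)^3) μ := by
    have : (fun ω => (ξ ω)^3) =
        fun ω => (ξ ω - 1)^3 + 3*(ξ ω - 1)^2 + 3*ξ ω - 2 := by funext ω; ring
    rw [this]
    exact ((hcube.add (h2.const_mul 3)).add (hint.const_mul 3)).sub (integrable_const 2)
  set m3 := ∫ ω, |ξ ω - 1|^3 ∂μ with hm3def
  have hm3 : 0 ≤ m3 := integral_nonneg fun ω => by positivity
  set K := 108 * (m3 + 1) with hKdef
  have hK : 0 < K := by positivity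
  set δ := min 1 (σ2 / K) with hδdef
  have hδ0 : 0 < δ := lt_min one_pos (by positivity)
  have hδ1 : δ ≤ 1 := min_le_left _ _
  have hδK : δ * K ≤ σ2 := by
    have : δ ≤ σ2 / K := min_le_right _ _
    calc δ * K ≤ (σ2 / K) * K := by nlinarith
      _ = σ2 := by field_simp
  -- integrability of the sqrt integrands
  have hfint : ∀ p : ℝ, 0 ≤ p → p ≤ 1 →
      Integrable (fun ω => Real.sqrt (1 + p * (ξ ω - 1))) μ := by
    intro p hp0 hp1
    refine ((integrable_const 2).add hint1.abs).mono'
      (Real.continuous_sqrt.measurable.comp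
        (measurable_const.add ((hmeas.sub measurable_const).const_mul p))).aestronglyMeasurable ?_
    filter_upwards with ω
    rw [Real.norm_eq_abs, abs_of_nonneg (Real.sqrt_nonneg _)]
    calc Real.sqrt (1 + p * (ξ ω - 1)) ≤ 1 + |1 + p * (ξ ω - 1)| := sqrt_le_one_add_abs _
      _ ≤ 2 + |ξ ω - 1| := by
          have := abs_add_le 1 (p * (ξ ω - 1))
          have h1 : |p * (ξ ω - 1)| = p * |ξ ω - 1| := by
            rw [abs_mul, abs_of_nonneg hp0]
          have h2 : p * |ξ ω - 1| ≤ |ξ ω - 1| := by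
            nlinarith [abs_nonneg (ξ ω - 1)]
          simp only [abs_one] at this
          linarith
  -- strict Jensen at δ
  have hfδlt : (∫ ω, Real.sqrt (1 + δ * (ξ ω - 1)) ∂μ) < 1 := by
    set g : Ω → ℝ := fun ω => 1 + δ * (ξ ω - 1) with hgdef
    have hgi : Integrable g μ := (integrable_const 1).add (hint1.const_mul δ)
    have hgs : ∀ᵐ ω ∂μ, g ω ∈ Set.Ici (0:ℝ) := by
      filter_upwards [hpos] with ω hω
      simp only [Set.mem_Ici, hgdef]
      nlinarith
    have hsg : Integrable ((fun x => Real.sqrt x) ∘ g) μ := hfint δ hδ0.le hδ1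
    have havg : ⨍ ω, g ω ∂μ = 1 := by
      rw [average_eq_integral, hgdef]
      rw [integral_add (integrable_const 1) (hint1.const_mul δ), integral_const_mul, hmean1]
      simp
    rcases Real.strictConcaveOn_sqrt.ae_eq_const_or_lt_map_average
        Real.continuous_sqrt.continuousOn isClosed_Ici hgs hgi hsg with hconst | hlt
    · exfalso
      rw [havg] at hconst
      have hz : (fun ω => (ξ ω - 1)^2) =ᵐ[μ] (fun _ => (0:ℝ)) := by
        filter_upwards [hconst] with ω hω
        simp only [Function.const, hgdef] at hω
        have : ξ ω - 1 = 0 := by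
          have := hδ0.ne'
          nlinarith [hω]
        simp [this]
      have : σ2 = 0 := by
        rw [hσ2def, integral_congr_ae hz, integral_zero]
      linarith
    · rw [havg, average_eq_integral, Real.sqrt_one] at hlt
      exact hlt
  set fδ := ∫ ω, Real.sqrt (1 + δ * (ξ ω - 1)) ∂μ with hfδdef
  have hfδ0 : 0 ≤ fδ := integral_nonneg fun ω => Real.sqrt_nonneg _
  set c := max fδ (1/2) with hcdef
  have hc0 : 0 < c := lt_of_lt_of_le one_half_pos (le_max_right _ _)
  have hc1 : c < 1 := max_lt hfδlt (by norm_num)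
  have hlogc : Real.log c < 0 := Real.log_neg hc0 hc1
  refine ⟨9/σ2, min 1 (-(2 * Real.log c)), by positivity, lt_min one_pos (by linarith), ?_⟩
  intro h hh0 hhle
  have hh1 : h ≤ 1 := le_trans hhle (min_le_left _ _)
  have hhlog : h ≤ -(2 * Real.log c) := le_trans hhle (min_le_right _ _)
  set E := Real.exp h with hEdef
  have hE1 : 1 ≤ E := by
    rw [hEdef]; exact Real.one_le_exp hh0.le
  have hE3 : E ≤ 3 := by
    rw [hEdef]
    calc Real.exp h ≤ Real.exp 1 := Real.exp_le_exp.2 hh1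
      _ ≤ 3 := by have := Real.exp_one_lt_d9; linarith
  have ha3 : E - 1 ≤ 3 * h := by
    have h1 : 1 - h ≤ Real.exp (-h) := by linarith [Real.add_one_le_exp (-h)]
    have h2 : Real.exp (-h) = E⁻¹ := by rw [hEdef, Real.exp_neg]
    have hEpos : 0 < E := lt_of_lt_of_le one_pos hE1
    have h3 : E * (1 - h) ≤ 1 := by
      have h4 : 1 - h ≤ E⁻¹ := h2 ▸ h1
      calc E * (1 - h) ≤ E * E⁻¹ := mul_le_mul_of_nonneg_left h4 hEpos.le
        _ = 1 := mul_inv_cancel₀ hEpos.ne'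
    nlinarith
  set Y : Ω → ℝ := fun ω => E * ξ ω - 1 with hYdef
  have iY : Integrable Y μ := (hint.const_mul E).sub (integrable_const 1)
  have iY2 : Integrable (fun ω => (Y ω)^2) μ := by
    have : (fun ω => (Y ω)^2) = fun ω => E^2 * (ξ ω)^2 - 2*E*ξ ω + 1 := by
      funext ω; simp only [hYdef]; ring
    rw [this]
    exact ((hξ2.const_mul _).sub (hint.const_mul _)).add (integrable_const 1)
  have iY3 : Integrable (fun ω => (Y ω)^3) μ := by
    have : (fun ω => (Y ω)^3) =
        fun ω => E^3 * (ξ ω)^3 - 3*E^2*(ξ ω)^2 + 3*E*ξ ω - 1 := by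
      funext ω; simp only [hYdef]; ring
    rw [this]
    exact (((hξ3.const_mul _).sub (hξ2.const_mul _)).add (hint.const_mul _)).sub (integrable_const 1)
  have iY3abs : Integrable (fun ω => |Y ω|^3) μ := by
    have : (fun ω => |Y ω|^3) = fun ω => |(Y ω)^3| := by
      funext ω; rw [abs_pow]
    rw [this]; exact iY3.abs
  have hIY : ∫ ω, Y ω ∂μ = E - 1 := by
    simp only [hYdef]
    rw [integral_sub (hint.const_mul E) (integrable_const 1), integral_const_mul, hmean]
    simp
  have hIY2 : σ2 ≤ ∫ ω, (Y ω)^2 ∂μ := by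
    have hexp : (fun ω => (Y ω)^2) =
        fun ω => E^2 * (ξ ω - 1)^2 + (2*E*(E-1)) * (ξ ω - 1) + (E-1)^2 := by
      funext ω; simp only [hYdef]; ring
    have iA : Integrable (fun ω => E^2 * (ξ ω - 1)^2) μ := h2.const_mul _
    have iB : Integrable (fun ω => (2*E*(E-1)) * (ξ ω - 1)) μ := hint1.const_mul _
    have iAB : Integrable (fun ω => E^2 * (ξ ω - 1)^2 + (2*E*(E-1)) * (ξ ω - 1)) μ := iA.add iB
    rw [hexp, integral_add iAB (integrable_const _),
      integral_add iA iB, integral_const_mul, integral_const_mul,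
      hmean1, integral_const]
    simp only [measure_univ, ENNReal.toReal_one, probReal_univ, smul_eq_mul, one_mul, mul_zero, add_zero]
    nlinarith [sq_nonneg (E-1), hσ2]
  have hIY3 : ∫ ω, (Y ω)^3 ∂μ ≤ ∫ ω, |Y ω|^3 ∂μ := by
    refine integral_mono iY3 iY3abs fun ω => ?_
    rw [← abs_pow]; exact le_abs_self _
  have hIY3absK : ∫ ω, |Y ω|^3 ∂μ ≤ K := by
    have hb : Integrable (fun ω => 108 * (|ξ ω - 1|^3 + 1)) μ :=
      (h3.add (integrable_const 1)).const_mul 108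
    have step : ∫ ω, |Y ω|^3 ∂μ ≤ ∫ ω, 108 * (|ξ ω - 1|^3 + 1) ∂μ := by
      refine integral_mono iY3abs hb fun ω => ?_
      have h1 : |Y ω| ≤ 3 * (|ξ ω - 1| + 1) := by
        have : Y ω = E * (ξ ω - 1) + (E - 1) := by simp only [hYdef]; ring
        rw [this]
        calc |E * (ξ ω - 1) + (E - 1)| ≤ |E * (ξ ω - 1)| + |E - 1| := abs_add_le _ _
          _ = E * |ξ ω - 1| + (E - 1) := by
              rw [abs_mul, abs_of_nonneg (show (0:ℝ) ≤ E by linarith),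
                abs_of_nonneg (show (0:ℝ) ≤ E - 1 by linarith)]
          _ ≤ 3 * (|ξ ω - 1| + 1) := by nlinarith [abs_nonneg (ξ ω - 1)]
      have h0 : (0:ℝ) ≤ |Y ω| := abs_nonneg _
      have ha := abs_nonneg (ξ ω - 1)
      calc |Y ω|^3 ≤ (3 * (|ξ ω - 1| + 1))^3 := by
            exact pow_le_pow_left₀ h0 h1 3
        _ ≤ 108 * (|ξ ω - 1|^3 + 1) := by
            nlinarith [sq_nonneg (|ξ ω - 1| - 1), mul_nonneg ha ha]
    calc ∫ ω, |Y ω|^3 ∂μ ≤ ∫ ω, 108 * (|ξ ω - 1|^3 + 1) ∂μ := step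
      _ = 108 * (m3 + 1) := by
          rw [integral_const_mul, integral_add h3 (integrable_const 1), integral_const]
          simp [hm3def]
      _ = K := hKdef.symm
  -- pointwise: p * Y ω ≥ -1 a.e. for p ∈ [0,1]
  -- key bound for each p
  have key : ∀ p : ℝ, 0 ≤ p → p ≤ 1 →
      (∫ ω, Real.sqrt (1 + p * (E * ξ ω - 1)) ∂μ) ≤ 1 + 9/σ2 * h^2 := by
    intro p hp0 hp1
    have isqrtY : Integrable (fun ω => Real.sqrt (1 + p * (Y ω))) μ := by
      refine ((integrable_const 2).add iY.abs).mono'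
        (Real.continuous_sqrt.measurable.comp (measurable_const.add
          (((hmeas.const_mul E).sub measurable_const).const_mul p))).aestronglyMeasurable ?_
      filter_upwards with ω
      rw [Real.norm_eq_abs, abs_of_nonneg (Real.sqrt_nonneg _)]
      calc Real.sqrt (1 + p * Y ω) ≤ 1 + |1 + p * Y ω| := sqrt_le_one_add_abs _
        _ ≤ 2 + |Y ω| := by
            have := abs_add_le 1 (p * Y ω)
            have h1 : |p * Y ω| = p * |Y ω| := by rw [abs_mul, abs_of_nonneg hp0]
            have h2' : p * |Y ω| ≤ |Y ω| := by nlinarith [abs_nonneg (Y ω)]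
            simp only [abs_one] at this
            linarith
    rcases le_or_gt p δ with hpδ | hpδ
    · -- small p regime
      have i1 : Integrable (fun ω => (p/2) * Y ω) μ := iY.const_mul _
      have i2 : Integrable (fun ω => (p^2/8) * (Y ω)^2) μ := iY2.const_mul _
      have i3 : Integrable (fun ω => (p^3/16) * (Y ω)^3) μ := iY3.const_mul _
      have i12 : Integrable (fun ω => 1 + (p/2) * Y ω) μ := (integrable_const 1).add i1
      have i123 : Integrable (fun ω => (1 + (p/2) * Y ω) - (p^2/8) * (Y ω)^2) μ := i12.sub i2
      have iq : Integrable (fun ω => 1 + (p * Y ω)/2 - (p * Y ω)^2/8 + (p * Y ω)^3/16) μ := by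
        have hrw : (fun ω => 1 + (p * Y ω)/2 - (p * Y ω)^2/8 + (p * Y ω)^3/16) =
            fun ω => ((1 + (p/2) * Y ω) - (p^2/8) * (Y ω)^2) + (p^3/16) * (Y ω)^3 := by
          funext ω; ring
        rw [hrw]
        exact i123.add i3
      have step1 : (∫ ω, Real.sqrt (1 + p * Y ω) ∂μ) ≤
          ∫ ω, (1 + (p * Y ω)/2 - (p * Y ω)^2/8 + (p * Y ω)^3/16) ∂μ := by
        refine integral_mono_ae isqrtY iq ?_
        filter_upwards [hpos] with ω hω
        refine sqrt_le_cubic ?_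
        have : 0 ≤ E * ξ ω := by nlinarith
        simp only [hYdef]
        nlinarith
      have step2 : (∫ ω, (1 + (p * Y ω)/2 - (p * Y ω)^2/8 + (p * Y ω)^3/16) ∂μ) =
          1 + (p/2) * (∫ ω, Y ω ∂μ) - (p^2/8) * (∫ ω, (Y ω)^2 ∂μ)
            + (p^3/16) * (∫ ω, (Y ω)^3 ∂μ) := by
        have hrw : (fun ω => 1 + (p * Y ω)/2 - (p * Y ω)^2/8 + (p * Y ω)^3/16) =
            fun ω => ((1 + (p/2) * Y ω) - (p^2/8) * (Y ω)^2) + (p^3/16) * (Y ω)^3 := by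
          funext ω; ring
        rw [hrw, integral_add i123 i3, integral_sub i12 i2,
          integral_add (integrable_const 1) i1,
          integral_const_mul, integral_const_mul, integral_const_mul, integral_const]
        simp [measure_univ]
      have hG := hIY3.trans hIY3absK
      have hpK : p * K ≤ σ2 := by nlinarith
      have ha0 : 0 ≤ E - 1 := by linarith
      have final : 1 + (p/2) * (E - 1) - (p^2/8) * (∫ ω, (Y ω)^2 ∂μ)
          + (p^3/16) * (∫ ω, (Y ω)^3 ∂μ) ≤ 1 + 9/σ2 * h^2 :=
        small_p_arith hσ2 hK hIY2 hG hpK hp0 ha0 ha3 hh0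
      calc (∫ ω, Real.sqrt (1 + p * (E * ξ ω - 1)) ∂μ)
          = ∫ ω, Real.sqrt (1 + p * Y ω) ∂μ := rfl
        _ ≤ _ := step1
        _ = _ := step2
        _ = 1 + (p/2) * (E - 1) - (p^2/8) * (∫ ω, (Y ω)^2 ∂μ)
            + (p^3/16) * (∫ ω, (Y ω)^3 ∂μ) := by rw [hIY]
        _ ≤ 1 + 9/σ2 * h^2 := final
    · -- large p regime
      set t := δ / p with htdef
      have hppos : 0 < p := hδ0.trans hpδ
      have ht0 : 0 < t := div_pos hδ0 hppos
      have ht1 : t ≤ 1 := by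
        rw [htdef, div_le_one hppos]; exact hpδ.le
      have htp : t * p = δ := by rw [htdef]; field_simp
      have hIp : Integrable (fun ω => Real.sqrt (1 + p * (ξ ω - 1))) μ := hfint p hp0 hp1
      set Ip := ∫ ω, Real.sqrt (1 + p * (ξ ω - 1)) ∂μ with hIpdef
      have hcomb : (1 - t) + t * Ip ≤ fδ := by
        have hlhs : Integrable (fun ω => (1 - t) + t * Real.sqrt (1 + p * (ξ ω - 1))) μ :=
          (integrable_const (1 - t)).add (hIp.const_mul t)
        have hmono := integral_mono_ae hlhs (hfint δ hδ0.le hδ1) ?_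
        · rw [integral_add (integrable_const (1-t)) (hIp.const_mul t), integral_const_mul,
            integral_const] at hmono
          simpa [measure_univ] using hmono
        · filter_upwards [hpos] with ω hω
          have hx : 0 ≤ 1 + p * (ξ ω - 1) := by nlinarith
          calc (1-t) + t * Real.sqrt (1 + p * (ξ ω - 1))
              ≤ Real.sqrt (1 - t + t * (1 + p * (ξ ω - 1))) := concave_sqrt_comb ht0.le ht1 hx
            _ = Real.sqrt (1 + δ * (ξ ω - 1)) := by
                rw [show 1 - t + t * (1 + p * (ξ ω - 1)) = 1 + (t*p) * (ξ ω - 1) by ring, htp]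
      have hIpfδ : Ip ≤ fδ := by
        have hprod : 0 ≤ (1 - t) * (1 - fδ) :=
          mul_nonneg (by linarith) (by linarith [hfδlt])
        have h1 : t * Ip ≤ t * fδ := by nlinarith
        exact le_of_mul_le_mul_left h1 ht0
      have hsqrtE : Real.sqrt E = Real.exp (h/2) := by
        have hEe : E = Real.exp (h/2) * Real.exp (h/2) := by
          rw [hEdef, ← Real.exp_add]; ring_nf
        rw [hEe]
        exact Real.sqrt_mul_self (Real.exp_pos _).le
      have hstep : (∫ ω, Real.sqrt (1 + p * Y ω) ∂μ) ≤ Real.exp (h/2) * Ip := by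
        have hrhs : Integrable (fun ω => Real.exp (h/2) * Real.sqrt (1 + p * (ξ ω - 1))) μ :=
          hIp.const_mul _
        have hmono := integral_mono_ae isqrtY hrhs ?_
        · rwa [integral_const_mul] at hmono
        · filter_upwards [hpos] with ω hω
          have h1 : 1 + p * Y ω ≤ E * (1 + p * (ξ ω - 1)) := by
            simp only [hYdef]; nlinarith
          calc Real.sqrt (1 + p * Y ω) ≤ Real.sqrt (E * (1 + p * (ξ ω - 1))) :=
                Real.sqrt_le_sqrt h1
            _ = Real.sqrt E * Real.sqrt (1 + p * (ξ ω - 1)) := Real.sqrt_mul (by linarith) _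
            _ = Real.exp (h/2) * Real.sqrt (1 + p * (ξ ω - 1)) := by rw [hsqrtE]
      have hfinal : Real.exp (h/2) * Ip ≤ 1 := by
        have h1 : Ip ≤ c := hIpfδ.trans (le_max_left _ _)
        have h2 : Real.exp (h/2) ≤ c⁻¹ := by
          have hle : h/2 ≤ -Real.log c := by linarith
          calc Real.exp (h/2) ≤ Real.exp (-Real.log c) := Real.exp_le_exp.2 hle
            _ = c⁻¹ := by rw [Real.exp_neg, Real.exp_log hc0]
        calc Real.exp (h/2) * Ip ≤ Real.exp (h/2) * c :=
              mul_le_mul_of_nonneg_left h1 (Real.exp_pos _).le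
          _ ≤ c⁻¹ * c := mul_le_mul_of_nonneg_right h2 hc0.le
          _ = 1 := inv_mul_cancel₀ hc0.ne'
      have hCpos : 0 ≤ 9/σ2 * h^2 := by positivity
      calc (∫ ω, Real.sqrt (1 + p * (E * ξ ω - 1)) ∂μ)
          = ∫ ω, Real.sqrt (1 + p * Y ω) ∂μ := rfl
        _ ≤ Real.exp (h/2) * Ip := hstep
        _ ≤ 1 := hfinal
        _ ≤ 1 + 9/σ2 * h^2 := by linarith
  -- conclude
  have hne : Nonempty (Set.Icc (0:ℝ) 1) := ⟨⟨0, by norm_num⟩⟩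
  have := ciSup_le (fun p : Set.Icc (0:ℝ) 1 => key p p.2.1 p.2.2)
  linarith [this]
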